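/- Consider an assortment T with undominated purchase options ordered as (v_0,p_0)=(0,0) < (v_1,p_1) < ... < (v_m,p_m) (coordinatewise increasing), and let w_i = (p_i − p_{i−1})/(v_i − v_{i−1}) be the indifference point between consecutive options, with w_0 = 0 and w_{m+1} = +∞. If the buyer's type w is drawn from distribution F and the buyer purchases the option maximizing w·v − p, then the expected revenue equals Σ_{i=1}^{m} (v_i − v_{i−1})·R(w_i), where R(w) = w(1−F(w)). -/

import Mathlib

/-- Revenue expression: with undominated options `(v_i, p_i)` strictly
increasing coordinatewise, `(v_0,p_0) = (0,0)`, and indifference points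
`w_i = (p_i − p_{i−1})/(v_i − v_{i−1})`, the expected revenue
`Σ_{i=1}^{m-1} p_i (F(w_{i+1}) − F(w_i)) + p_m (1 − F(w_m))` equals
`Σ_{i=1}^m (v_i − v_{i−1}) R(w_i)` where `R(w) = w (1 − F(w))`. -/
theorem stmt4 (m : ℕ) (hm : 1 ≤ m) (v p : ℕ → ℝ)
    (hv0 : v 0 = 0) (hp0 : p 0 = 0)
    (hvmono : ∀ i, i < m → v i < v (i + 1))
    (hpmono : ∀ i, i < m → p i < p (i + 1))
    (w : ℕ → ℝ)
    (hw : ∀ i, 1 ≤ i → i ≤ m → w i = (p i - p (i - 1)) / (v i - v (i - 1)))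
    (hwinc : ∀ i, 1 ≤ i → i < m → w i < w (i + 1))
    (F : ℝ → ℝ) :
    (∑ i ∈ Finset.Ico 1 m, p i * (F (w (i + 1)) - F (w i)))
        + p m * (1 - F (w m))
      = ∑ i ∈ Finset.Icc 1 m, (v i - v (i - 1)) * (w i * (1 - F (w i))) := by
  have key : ∑ i ∈ Finset.Icc 1 m, (v i - v (i - 1)) * (w i * (1 - F (w i)))
      = ∑ i ∈ Finset.Icc 1 m, (p i - p (i - 1)) * (1 - F (w i)) := by
    apply Finset.sum_congr rfl
    intro i hi
    simp only [Finset.mem_Icc] at hi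
    have h1 : 1 ≤ i := hi.1
    have h2 : i ≤ m := hi.2
    have hvlt : v (i - 1) < v i := by
      have := hvmono (i - 1) (by omega)
      rwa [Nat.sub_add_cancel h1] at this
    have hne : v i - v (i - 1) ≠ 0 := by linarith
    rw [hw i h1 h2]
    field_simp
  rw [key]
  clear hw hwinc hvmono hv0 key
  induction m, hm using Nat.le_induction with
  | base =>
    simp [Finset.Icc_self, hp0]
  | succ n hn ih =>
    rw [Finset.sum_Ico_succ_top (by omega), Finset.sum_Icc_succ_top (by omega)]
    have ih' := ih (fun i hi => hpmono i (by omega))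
    simp only [Nat.add_sub_cancel]
    linarith [ih']
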